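/- Let f(λ) = Σ_{d=0}^{D} a_d λ^{D−d} be a monic polynomial over ℂ and ℓ a positive integer. The multiset of roots of f is invariant under multiplication by e^{i2π/ℓ} if and only if a_d = 0 for all d with ℓ ∤ d. -/

import Mathlib

open Polynomial

lemma scaleRoots_X_sub_C (a ω : ℂ) : (X - C a).scaleRoots ω = X - C (ω * a) := by
  ext n
  rcases n with _ | _ | n <;>
    simp [coeff_scaleRoots, natDegree_X_sub_C, coeff_sub, coeff_X, coeff_C, mul_comm]

lemma scaleRoots_prod (s : Multiset ℂ) (ω : ℂ) :
    ((s.map fun r => X - C r).prod).scaleRoots ω = (s.map fun r => X - C (ω * r)).prod := by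
  induction s using Multiset.induction with
  | empty => simp [one_scaleRoots]
  | cons a t ih =>
      simp only [Multiset.map_cons, Multiset.prod_cons]
      rw [mul_scaleRoots_of_noZeroDivisors, scaleRoots_X_sub_C, ih]

/-- for a monic polynomial `f(λ) = Σ_{d=0}^{D} a_d λ^{D-d}` over `ℂ` and
`ℓ ≥ 1`, the multiset of roots of `f` is invariant under multiplication by `e^{i2π/ℓ}`
iff `a_d = 0` for all `d` with `ℓ ∤ d`. -/
theorem stmt14 (ℓ : ℕ) (hℓ : 0 < ℓ) (f : Polynomial ℂ) (hf : f.Monic) :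
    (f.roots.map (fun z => Complex.exp (2 * (Real.pi : ℂ) * Complex.I / (ℓ : ℂ)) * z)
        = f.roots) ↔
      ∀ d ≤ f.natDegree, ¬ (ℓ ∣ d) → f.coeff (f.natDegree - d) = 0 := by
  set ω : ℂ := Complex.exp (2 * (Real.pi : ℂ) * Complex.I / (ℓ : ℂ)) with hω
  have hprim : IsPrimitiveRoot ω ℓ := Complex.isPrimitiveRoot_exp ℓ hℓ.ne'
  have hsplit : f.Splits := IsAlgClosed.splits f
  have hprod : f = (f.roots.map fun r => X - C r).prod :=
    hsplit.eq_prod_roots_of_monic hf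
  have hscale : f.scaleRoots ω = (f.roots.map fun r => X - C (ω * r)).prod := by
    conv_lhs => rw [hprod]
    exact scaleRoots_prod _ _
  have hmm : (f.roots.map fun r => X - C (ω * r))
      = (f.roots.map fun z => ω * z).map fun r => X - C r := by
    rw [Multiset.map_map]; rfl
  have key : (f.roots.map fun z => ω * z) = f.roots ↔ f.scaleRoots ω = f := by
    constructor
    · intro h
      rw [hscale, hmm, h, ← hprod]
    · intro h
      have h2 : (f.scaleRoots ω).roots = f.roots := by rw [h]
      rw [hscale, hmm, roots_multiset_prod_X_sub_C] at h2
      exact h2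
  rw [key]
  constructor
  · intro h d hd hnd
    have := congrArg (fun p => p.coeff (f.natDegree - d)) h
    simp only [coeff_scaleRoots] at this
    rw [Nat.sub_sub_self hd] at this
    have hω1 : ω ^ d ≠ 1 := fun h1 => hnd ((hprim.pow_eq_one_iff_dvd d).mp h1)
    have := sub_eq_zero.mpr this
    rw [← mul_one (f.coeff (f.natDegree - d)), mul_assoc, ← mul_sub] at this
    rcases mul_eq_zero.mp this with h0 | h0
    · simpa using h0
    · exact absurd (sub_eq_zero.mp h0) (by simpa using hω1)
  · intro h
    ext n
    rw [coeff_scaleRoots]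
    rcases le_or_gt n f.natDegree with hn | hn
    · by_cases hdvd : ℓ ∣ f.natDegree - n
      · rw [(hprim.pow_eq_one_iff_dvd _).mpr hdvd, mul_one]
      · have := h (f.natDegree - n) (Nat.sub_le _ _) hdvd
        rw [Nat.sub_sub_self hn] at this
        rw [this, zero_mul]
    · rw [Nat.sub_eq_zero_of_le hn.le, pow_zero, mul_one]
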